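/- For a linear code C over F_q with covering radius ρ and external distance s (the number of distinct nonzero weights of codewords in the dual code), one has ρ ≤ s. -/

import Mathlib

open Finset

section aux
variable {F : Type} [Field F] [Fintype F] [DecidableEq F]
variable {R : Type*} [Field R]

lemma addchar_map_sum {ι : Type*} (ψ : AddChar F R) (s : Finset ι) (f : ι → F) :
    ψ (∑ i ∈ s, f i) = ∏ i ∈ s, ψ (f i) := by
  classical
  induction s using Finset.cons_induction with
  | empty => simp
  | cons a s ha ih => rw [Finset.sum_cons, Finset.prod_cons, AddChar.map_add_eq_mul, ih]

lemma key {n : ℕ} (ψ : AddChar F R) (hψ : ∀ a : F, a ≠ 0 → ∑ t : F, ψ (t * a) = 0)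
    (W : Finset ℕ) :
    ∀ (A : Finset (Fin n)) (x : Fin n → F),
      W.card < #{i ∈ A | x i ≠ 0} →
      ∑ u : Fin n → F, ((∏ i ∈ Aᶜ, if u i = 0 then (1:R) else 0) *
        (∏ w ∈ W, ((w : R) - (#{i ∈ A | u i ≠ 0} : R))) * ψ (∑ i, u i * x i)) = 0 := by
  induction W using Finset.induction with
  | empty =>
    intro A x hx
    obtain ⟨i₀, hi₀⟩ := Finset.card_pos.mp (by omega : 0 < #{i ∈ A | x i ≠ 0})
    rw [Finset.mem_filter] at hi₀
    have hterm : ∀ u : Fin n → F,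
        ((∏ i ∈ Aᶜ, if u i = 0 then (1:R) else 0) * (∏ w ∈ (∅ : Finset ℕ), ((w : R) - (#{i ∈ A | u i ≠ 0} : R))) * ψ (∑ i, u i * x i))
        = ∏ i, ((if i ∈ A then (1:R) else if u i = 0 then 1 else 0) * ψ (u i * x i)) := by
      intro u
      rw [Finset.prod_empty, mul_one, addchar_map_sum, Finset.prod_mul_distrib]
      congr 1
      rw [show Aᶜ = Finset.univ.filter (fun i => ¬ i ∈ A) from by ext i; simp, Finset.prod_filter]
      apply Finset.prod_congr rfl
      intro i _
      by_cases h : i ∈ A <;> simp [h]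
    have hswap := Fintype.prod_sum (fun (i : Fin n) (t : F) =>
      (if i ∈ A then (1:R) else if t = 0 then 1 else 0) * ψ (t * x i))
    rw [Finset.sum_congr rfl (fun u _ => hterm u), ← hswap]
    apply Finset.prod_eq_zero (Finset.mem_univ i₀)
    simp only [hi₀.1, if_true, one_mul]
    exact hψ (x i₀) hi₀.2
  | @insert w s hw ih =>
    intro A x hx
    rw [Finset.card_insert_of_notMem hw] at hx
    have hx' : s.card < #{i ∈ A | x i ≠ 0} := by omega
    have hsplit : ∀ u : Fin n → F,
        ((w:R) - (#{i ∈ A | u i ≠ 0} : R))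
          = (((w:R) - (#A : R)) + ∑ i ∈ A, (if u i = 0 then (1:R) else 0)) := by
      intro u
      rw [Finset.sum_boole]
      have hn : #{i ∈ A | u i ≠ 0} + #{i ∈ A | u i = 0} = #A := by
        rw [← Finset.card_filter_add_card_filter_not (s := A)
          (p := fun i => u i ≠ 0)]
        simp only [ne_eq, not_not]
      have hn' : ((#{i ∈ A | u i ≠ 0} : ℕ) : R) + ((#{i ∈ A | u i = 0} : ℕ) : R) = ((#A : ℕ) : R) := by
        exact_mod_cast congrArg (Nat.cast (R := R)) hn
      linear_combination - hn'
    have hterm : ∀ u : Fin n → F,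
        ((∏ i ∈ Aᶜ, if u i = 0 then (1:R) else 0) *
          (∏ w' ∈ insert w s, ((w' : R) - (#{i ∈ A | u i ≠ 0} : R))) * ψ (∑ i, u i * x i))
        = ((w:R) - (#A : R)) * ((∏ i ∈ Aᶜ, if u i = 0 then (1:R) else 0) *
            (∏ w' ∈ s, ((w' : R) - (#{i ∈ A | u i ≠ 0} : R))) * ψ (∑ i, u i * x i))
          + ∑ i ∈ A, ((∏ j ∈ Aᶜ, if u j = 0 then (1:R) else 0) * (if u i = 0 then (1:R) else 0) *
              (∏ w' ∈ s, ((w' : R) - (#{i ∈ A | u i ≠ 0} : R))) * ψ (∑ i, u i * x i)) := by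
      intro u
      rw [Finset.prod_insert hw, hsplit u, add_mul, mul_add, add_mul]
      congr 1
      · ring
      · rw [Finset.sum_mul, Finset.mul_sum, Finset.sum_mul]
        apply Finset.sum_congr rfl
        intro i _
        ring
    rw [Finset.sum_congr rfl (fun u _ => hterm u), Finset.sum_add_distrib, ← Finset.mul_sum,
      ih A x hx', mul_zero, zero_add, Finset.sum_comm]
    apply Finset.sum_eq_zero
    intro i hi
    have hterm2 : ∀ u : Fin n → F,
        ((∏ j ∈ Aᶜ, if u j = 0 then (1:R) else 0) * (if u i = 0 then (1:R) else 0) *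
          (∏ w' ∈ s, ((w' : R) - (#{i ∈ A | u i ≠ 0} : R))) * ψ (∑ i, u i * x i))
        = ((∏ j ∈ (A.erase i)ᶜ, if u j = 0 then (1:R) else 0) *
          (∏ w' ∈ s, ((w' : R) - (#{j ∈ A.erase i | u j ≠ 0} : R))) * ψ (∑ i, u i * x i)) := by
      intro u
      have hind : (∏ j ∈ (A.erase i)ᶜ, if u j = 0 then (1:R) else 0)
          = (if u i = 0 then (1:R) else 0) * ∏ j ∈ Aᶜ, if u j = 0 then (1:R) else 0 := by
        rw [Finset.compl_erase, Finset.prod_insert (by simp [hi])]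
      rw [hind]
      by_cases h0 : u i = 0
      · have hcnt : #{j ∈ A.erase i | u j ≠ 0} = #{i ∈ A | u i ≠ 0} := by
          rw [Finset.filter_erase, Finset.erase_eq_of_notMem (by simp [h0])]
        rw [hcnt]
        ring
      · simp only [h0, if_false]
        ring
    rw [Finset.sum_congr rfl (fun u _ => hterm2 u)]
    apply ih (A.erase i) x
    have h1 : #{i ∈ A | x i ≠ 0} - 1 ≤ #{j ∈ A.erase i | x j ≠ 0} := by
      rw [Finset.filter_erase]
      exact Finset.pred_card_le_card_erase
    omega

lemma key' {n : ℕ} (ψ : AddChar F R) (hψ : ∀ a : F, a ≠ 0 → ∑ t : F, ψ (t * a) = 0)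
    (W : Finset ℕ) (x : Fin n → F) (hx : W.card < hammingNorm x) :
    ∑ u : Fin n → F, ((∏ w ∈ W, ((w : R) - (hammingNorm u : R))) * ψ (∑ i, u i * x i)) = 0 := by
  have h := key ψ hψ W Finset.univ x (by simpa [hammingNorm] using hx)
  simpa [hammingNorm, Finset.compl_univ] using h

lemma dualsum {n : ℕ} (ψ : AddChar F R) (a0 : F) (ha0 : ψ a0 ≠ 1)
    (C : Submodule F (Fin n → F)) [Fintype C] (u : Fin n → F)
    (hu : ¬ ∀ c ∈ C, ∑ i, u i * c i = 0) :
    ∑ c : C, ψ (∑ i, u i * (c : Fin n → F) i) = 0 := by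
  push_neg at hu
  obtain ⟨c0, hc0C, hc0⟩ := hu
  set b : F := ∑ i, u i * c0 i with hb
  let c' : C := ⟨(a0 * b⁻¹) • c0, C.smul_mem _ hc0C⟩
  have hbc' : ∑ i, u i * (c' : Fin n → F) i = a0 := by
    show ∑ i, u i * ((a0 * b⁻¹) • c0) i = a0
    have : ∀ i, u i * ((a0 * b⁻¹) • c0) i = (a0 * b⁻¹) * (u i * c0 i) := by
      intro i; simp [Pi.smul_apply, smul_eq_mul]; ring
    rw [Finset.sum_congr rfl (fun i _ => this i), ← Finset.mul_sum, ← hb]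
    field_simp
  have hS : ∑ c : C, ψ (∑ i, u i * ((c + c' : C) : Fin n → F) i)
      = ∑ c : C, ψ (∑ i, u i * (c : Fin n → F) i) :=
    Fintype.sum_equiv (Equiv.addRight c') _ _ (fun c => rfl)
  have hterm : ∀ c : C, ψ (∑ i, u i * ((c + c' : C) : Fin n → F) i)
      = ψ (∑ i, u i * (c : Fin n → F) i) * ψ a0 := by
    intro c
    have : (∑ i, u i * ((c + c' : C) : Fin n → F) i)
        = (∑ i, u i * (c : Fin n → F) i) + (∑ i, u i * (c' : Fin n → F) i) := by
      rw [← Finset.sum_add_distrib]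
      apply Finset.sum_congr rfl
      intro i _
      show u i * ((c : Fin n → F) i + (c' : Fin n → F) i) = _
      ring
    rw [this, AddChar.map_add_eq_mul, hbc']
  rw [Finset.sum_congr rfl (fun c _ => hterm c), ← Finset.sum_mul] at hS
  have h2 : (∑ c : C, ψ (∑ i, u i * (c : Fin n → F) i)) * (ψ a0 - 1) = 0 := by
    rw [mul_sub, mul_one]
    exact sub_eq_zero.mpr hS
  rcases mul_eq_zero.mp h2 with h | h
  · exact h
  · exact absurd (sub_eq_zero.mp h) ha0

end aux


/-- For a linear code C over F_q with covering radius ρ and external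
distance s (number of distinct nonzero weights in the dual code), ρ ≤ s. -/
theorem covering_radius_le_external_distance
    {q n : ℕ} (F : Type) [Field F] [Fintype F] [DecidableEq F]
    (hq : Fintype.card F = q)
    (C : Submodule F (Fin n → F)) (ρ : ℕ)
    (hρ₁ : ∀ x : Fin n → F, ∃ c ∈ C, hammingDist x c ≤ ρ)
    (hρ₂ : ∃ x : Fin n → F, ∀ c ∈ C, ρ ≤ hammingDist x c) :
    ρ ≤ {w : ℕ | w ≠ 0 ∧ ∃ x : Fin n → F,
          (∀ c ∈ C, ∑ i, x i * c i = 0) ∧ hammingNorm x = w}.ncard := by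
  classical
  by_contra hlt
  push_neg at hlt
  set Wset := {w : ℕ | w ≠ 0 ∧ ∃ x : Fin n → F,
      (∀ c ∈ C, ∑ i, x i * c i = 0) ∧ hammingNorm x = w} with hWset
  have hWfin : Wset.Finite := by
    apply Set.Finite.subset (Set.finite_Iic n)
    rintro w ⟨-, x, -, rfl⟩
    simpa using (hammingNorm_le_card_fintype (x := x))
  set Wf := hWfin.toFinset with hWf
  have hcard : Wf.card = Wset.ncard := (Set.ncard_eq_toFinset_card Wset hWfin).symm
  have hWmem : ∀ w : ℕ, w ∈ Wf ↔ w ∈ Wset := fun w => hWfin.mem_toFinset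
  obtain ⟨v, hv⟩ := hρ₂
  -- the character
  have hchar : ringChar ℂ ≠ ringChar F := by
    rw [ringChar.eq_zero]
    have : Fact (Nat.Prime (ringChar F)) := ⟨CharP.char_is_prime F _⟩
    exact fun h => this.1.ne_zero h.symm
  let pc := AddChar.FiniteField.primitiveChar F ℂ hchar
  set R := CyclotomicField pc.n ℂ with hR
  haveI : CharZero R := charZero_of_injective_algebraMap (algebraMap ℂ R).injective
  set ψ := pc.char with hψdef
  have hψsum : ∀ a : F, a ≠ 0 → ∑ t : F, ψ (t * a) = 0 := by
    intro a ha
    have h := AddChar.sum_eq_zero_of_ne_one (pc.prim ha)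
    simp only [AddChar.mulShift_apply] at h
    rw [← h]
    apply Finset.sum_congr rfl
    intro t _
    rw [mul_comm]
  obtain ⟨a0, ha0⟩ : ∃ a0 : F, ψ a0 ≠ 1 := by
    have h1 : (ψ.mulShift 1) ≠ 1 := pc.prim one_ne_zero
    rw [AddChar.mulShift_one] at h1
    exact AddChar.ne_one_iff.mp h1
  haveI : Fintype C := Fintype.ofFinite C
  -- the total sum
  set α : (Fin n → F) → R := fun u => ∏ w ∈ Wf, ((w : R) - (hammingNorm u : R)) with hα
  have hTotal0 : ∑ c : C, ∑ u : Fin n → F,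
      (α u * ψ (∑ i, u i * (v + (c : Fin n → F)) i)) = 0 := by
    apply Finset.sum_eq_zero
    intro c _
    apply key' ψ hψsum Wf
    have h1 : ρ ≤ hammingDist v (-(c : Fin n → F)) := hv _ (C.neg_mem c.2)
    rw [hammingDist_eq_hammingNorm, ← neg_add, show hammingNorm (-(v + (c : Fin n → F))) = hammingNorm (v + (c : Fin n → F)) by unfold hammingNorm; exact congrArg Finset.card (Finset.filter_congr (fun i _ => by rw [Pi.neg_apply]; exact neg_ne_zero))] at h1
    omega
  have hswap : ∑ c : C, ∑ u : Fin n → F,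
      (α u * ψ (∑ i, u i * (v + (c : Fin n → F)) i))
      = ∑ u : Fin n → F, (α u * ψ (∑ i, u i * v i)
          * ∑ c : C, ψ (∑ i, u i * (c : Fin n → F) i)) := by
    rw [Finset.sum_comm]
    apply Finset.sum_congr rfl
    intro u _
    rw [Finset.mul_sum]
    apply Finset.sum_congr rfl
    intro c _
    have hB : (∑ i, u i * (v + (c : Fin n → F)) i)
        = (∑ i, u i * v i) + (∑ i, u i * (c : Fin n → F) i) := by
      rw [← Finset.sum_add_distrib]
      apply Finset.sum_congr rfl
      intro i _
      show u i * (v i + (c : Fin n → F) i) = _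
      ring
    rw [hB, AddChar.map_add_eq_mul, mul_assoc]
  have hsingle : ∑ u : Fin n → F, (α u * ψ (∑ i, u i * v i)
        * ∑ c : C, ψ (∑ i, u i * (c : Fin n → F) i))
      = (∏ w ∈ Wf, (w : R)) * (Fintype.card C : R) := by
    rw [Finset.sum_eq_single_of_mem 0 (Finset.mem_univ _)]
    · have h0 : α 0 = ∏ w ∈ Wf, (w : R) := by
        rw [hα]
        simp [hammingNorm_zero]
      have h1 : (∑ i, (0 : Fin n → F) i * v i) = 0 := by simp
      have h2 : ∀ c : C, (∑ i, (0 : Fin n → F) i * (c : Fin n → F) i) = 0 := by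
        intro c; simp
      rw [h0, h1, AddChar.map_zero_eq_one, mul_one,
        Finset.sum_congr rfl (fun c _ => by rw [h2 c, AddChar.map_zero_eq_one])]
      simp
    · intro u _ hu
      by_cases hdual : ∀ c ∈ C, ∑ i, u i * c i = 0
      · have hmem : hammingNorm u ∈ Wf := by
          rw [hWmem]
          exact ⟨fun h => hu (hammingNorm_eq_zero.mp h), u, hdual, rfl⟩
        have : α u = 0 := Finset.prod_eq_zero hmem (sub_self _)
        rw [this, zero_mul, zero_mul]
      · rw [dualsum ψ a0 ha0 C u hdual, mul_zero]
  have hne : (∏ w ∈ Wf, (w : R)) * (Fintype.card C : R) ≠ 0 := by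
    apply mul_ne_zero
    · rw [Finset.prod_ne_zero_iff]
      intro w hw
      have : w ≠ 0 := ((hWmem w).mp hw).1
      exact_mod_cast this
    · exact_mod_cast Fintype.card_ne_zero
  rw [hswap, hsingle] at hTotal0
  exact hne hTotal0
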